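/- Let w(t,r) := (cos t + r·cos(t/2), sin t + r·sin(t/2), r·sin(t/2)) and P_∞ := [0,2π) × ℝ. For (x,y) ∈ ℝ², define Z_w(x,y) := { z ∈ ℝ : (x,y,z) ∈ w(P_∞) }. Then for every (x,y) ∈ ℝ² with (x,y) ≠ (−1,0), the set Z_w(x,y) has exactly one element. -/

import Mathlib

open Real Set

theorem simple_mobius_cross_section_singleton
    (w : ℝ × ℝ → ℝ × ℝ × ℝ)
    (hw : ∀ t r : ℝ, w (t, r) =
      (Real.cos t + r * Real.cos (t / 2),
       Real.sin t + r * Real.sin (t / 2),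
       r * Real.sin (t / 2)))
    (Pinf : Set (ℝ × ℝ)) (hPinf : Pinf = Set.Ico 0 (2 * π) ×ˢ Set.univ)
    (Z : ℝ → ℝ → Set ℝ)
    (hZ : ∀ x y : ℝ, Z x y = {z : ℝ | (x, y, z) ∈ w '' Pinf}) :
    ∀ x y : ℝ, (x, y) ≠ ((-1 : ℝ), (0 : ℝ)) → (Z x y).encard = 1 := by
  intro x y hxy
  have hN : (x + 1) ^ 2 + y ^ 2 ≠ 0 := by
    intro h
    apply hxy
    have h1 : x + 1 = 0 := by nlinarith [sq_nonneg (x + 1), sq_nonneg y]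
    have h2 : y = 0 := by nlinarith [sq_nonneg (x + 1), sq_nonneg y]
    rw [Prod.mk.injEq]
    constructor <;> linarith
  have hset : Z x y = {y - 2 * y * (x + 1) / ((x + 1) ^ 2 + y ^ 2)} := by
    rw [hZ]
    ext z
    simp only [Set.mem_setOf_eq, Set.mem_singleton_iff, Set.mem_image]
    constructor
    · rintro ⟨⟨t, r⟩, _, heq⟩
      rw [hw] at heq
      injection heq with e1 h23
      injection h23 with e2 e3
      have hP : Real.sin (t / 2) ^ 2 + Real.cos (t / 2) ^ 2 = 1 :=
        Real.sin_sq_add_cos_sq _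
      have hct : Real.cos t = 2 * Real.cos (t / 2) ^ 2 - 1 := by
        have h := Real.cos_two_mul (t / 2)
        rw [show 2 * (t / 2) = t by ring] at h
        exact h
      have hst : Real.sin t = 2 * Real.sin (t / 2) * Real.cos (t / 2) := by
        have h := Real.sin_two_mul (t / 2)
        rw [show 2 * (t / 2) = t by ring] at h
        exact h
      have hA : x + 1 = Real.cos (t / 2) * (2 * Real.cos (t / 2) + r) := by
        rw [← e1, hct]; ring
      have hB : y = Real.sin (t / 2) * (2 * Real.cos (t / 2) + r) := by
        rw [← e2, hst]; ring
      have h2sc : 2 * Real.sin (t / 2) * Real.cos (t / 2) * ((x + 1) ^ 2 + y ^ 2)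
          = 2 * y * (x + 1) := by
        rw [hA, hB]
        linear_combination (2 * Real.sin (t / 2) * Real.cos (t / 2) *
          (2 * Real.cos (t / 2) + r) ^ 2) * hP
      have hdiv : 2 * y * (x + 1) / ((x + 1) ^ 2 + y ^ 2)
          = 2 * Real.sin (t / 2) * Real.cos (t / 2) := by
        rw [div_eq_iff hN]
        linear_combination -h2sc
      rw [hdiv]
      linear_combination e2 - hst - e3
    · intro hz
      subst hz
      by_cases hy : y = 0
      · subst hy
        refine ⟨(0, x - 1), ?_, ?_⟩
        · rw [hPinf]
          exact Set.mem_prod.mpr ⟨⟨le_refl _, by positivity⟩, Set.mem_univ _⟩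
        · rw [hw]
          norm_num
      · have hNpos : 0 < (x + 1) ^ 2 + y ^ 2 := by positivity
        set n := Real.sqrt ((x + 1) ^ 2 + y ^ 2) with hn_def
        have hn : 0 < n := Real.sqrt_pos.mpr hNpos
        have hn2 : n ^ 2 = (x + 1) ^ 2 + y ^ 2 := Real.sq_sqrt hNpos.le
        set e := if 0 < y then x + 1 else -(x + 1) with he_def
        have he2 : e ^ 2 = (x + 1) ^ 2 := by rw [he_def]; split <;> ring
        have hu2 : (e / n) ^ 2 = (x + 1) ^ 2 / ((x + 1) ^ 2 + y ^ 2) := by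
          rw [div_pow, he2, hn2]
        have hy2 : 0 < y ^ 2 := by positivity
        have hu_lt : (e / n) ^ 2 < 1 := by
          rw [hu2, div_lt_one hNpos]; linarith
        have hu1 : |e / n| < 1 := (sq_lt_one_iff_abs_lt_one _).mp hu_lt
        have hu1' := abs_lt.mp hu1
        set θ := Real.arccos (e / n) with hθ
        have hc : Real.cos θ = e / n := Real.cos_arccos hu1'.1.le hu1'.2.le
        have h1u : 1 - (e / n) ^ 2 = (|y| / n) ^ 2 := by
          rw [hu2, div_pow, sq_abs, hn2]
          field_simp
          ring
        have hs : Real.sin θ = |y| / n := by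
          rw [Real.sin_arccos, h1u, Real.sqrt_sq (by positivity)]
        have hK : Real.sin θ * (x + 1) = Real.cos θ * y := by
          rw [hs, hc, he_def]
          split_ifs with h
          · rw [abs_of_pos h]; ring
          · rw [abs_of_neg (lt_of_le_of_ne (not_lt.mp h) hy)]; ring
        have hP : Real.sin θ ^ 2 + Real.cos θ ^ 2 = 1 := Real.sin_sq_add_cos_sq θ
        refine ⟨(2 * θ, (x - (2 * Real.cos θ ^ 2 - 1)) * Real.cos θ +
          (y - 2 * Real.sin θ * Real.cos θ) * Real.sin θ), ?_, ?_⟩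
        · rw [hPinf]
          have h0 : (0:ℝ) ≤ 2 * θ := by
            have := Real.arccos_nonneg (e / n)
            rw [← hθ] at this
            linarith
          have hlt : 2 * θ < 2 * π := by
            have hle : θ ≤ π := Real.arccos_le_pi _
            have hne : θ ≠ π := by
              intro h
              rw [hθ] at h
              have := Real.arccos_eq_pi.mp h
              linarith [hu1'.1]
            have : θ < π := lt_of_le_of_ne hle hne
            linarith
          exact Set.mk_mem_prod ⟨h0, hlt⟩ (Set.mem_univ _)
        · rw [hw]
          have ht2 : 2 * θ / 2 = θ := by ring
          rw [ht2, Real.cos_two_mul, Real.sin_two_mul]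
          have hdiv : 2 * y * (x + 1) / ((x + 1) ^ 2 + y ^ 2)
              = 2 * Real.sin θ * Real.cos θ := by
            rw [div_eq_iff hN]
            linear_combination (-(2 * (Real.cos θ * (x + 1) - Real.sin θ * y))) * hK
              - 2 * (x + 1) * y * hP
          rw [hdiv]
          simp only [Prod.mk.injEq]
          refine ⟨?_, ?_, ?_⟩
          · linear_combination ((x + 1) - 2 * Real.cos θ ^ 2) * hP - Real.sin θ * hK
          · linear_combination (y - 2 * Real.sin θ * Real.cos θ) * hP + Real.cos θ * hK
          · linear_combination Real.cos θ * hK + (y - 2 * Real.sin θ * Real.cos θ) * hP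
  rw [hset]
  exact Set.encard_singleton _
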